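/- Let V be an oriented 4-dimensional real vector space, ω a 2-form with ω∧ω > 0, g an inner product, and J a complex structure on V compatible with the orientation. Then g(v,w) = ω(v,Jw) for all v,w if and only if dvol_ω = dvol_g and *_g(ω∧λ) = -λ∘J for all covectors λ ∈ V*. -/

import Mathlib

open Matrix MeasureTheory

noncomputable section

/-- Vectors in ℝ⁴. -/
abbrev V4 : Type := Fin 4 → ℝ

/-- 2-forms on ℝ⁴, represented by their (antisymmetric) coefficient matrices. -/
abbrev Mat4 : Type := Matrix (Fin 4) (Fin 4) ℝ

/-- The wedge product of two 2-forms, as the coefficient of dx0∧dx1∧dx2∧dx3. -/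
def w22 (A B : Mat4) : ℝ :=
  A 0 1 * B 2 3 - A 0 2 * B 1 3 + A 0 3 * B 1 2 +
  A 2 3 * B 0 1 - A 1 3 * B 0 2 + A 1 2 * B 0 3

/-- The wedge product of a 1-form and a 3-form (3-forms are written in the
basis σ_m = ι(e_m)(dx0∧dx1∧dx2∧dx3)), as a multiple of dx0∧dx1∧dx2∧dx3. -/
def w13 (l b : V4) : ℝ := l ⬝ᵥ b

/-- The wedge product of a 2-form and a 1-form, as a 3-form in the basis σ_m. -/
def w21 (A : Mat4) (l : V4) : V4 :=
  ![A 1 2 * l 3 - A 1 3 * l 2 + A 2 3 * l 1,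
    -(A 0 2 * l 3 - A 0 3 * l 2 + A 2 3 * l 0),
    A 0 1 * l 3 - A 0 3 * l 1 + A 1 3 * l 0,
    -(A 0 1 * l 2 - A 0 2 * l 1 + A 1 2 * l 0)]

/-- Interior product of a vector with a 2-form. -/
def iota2 (v : V4) (A : Mat4) : V4 := Aᵀ.mulVec v

/-- Interior product of a vector with a 4-form c·dx0∧dx1∧dx2∧dx3. -/
def iota4 (v : V4) (c : ℝ) : V4 := c • v

/-- The metric volume form of the inner product with Gram matrix G, as a
multiple of dx0∧dx1∧dx2∧dx3 (standard orientation). -/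
def volScalar (G : Mat4) : ℝ := Real.sqrt G.det

/-- The inner product with Gram matrix G. -/
def bilin (G : Mat4) (v w : V4) : ℝ := v ⬝ᵥ G.mulVec w

/-- The induced inner product on 1-forms. -/
def ip1 (G : Mat4) (l m : V4) : ℝ := l ⬝ᵥ G⁻¹.mulVec m

/-- The induced inner product on 2-forms. -/
def ip2 (G : Mat4) (A B : Mat4) : ℝ := (1 / 2) * (Aᵀ * G⁻¹ * B * G⁻¹).trace

/-- The wedge-duality involution on 2-forms (the Hodge star of the standard
metric), characterized by w22 A (dual2 B) = ip2 1 A B. -/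
def dual2 (A : Mat4) : Mat4 :=
  !![0, A 2 3, -(A 1 3), A 1 2;
     -(A 2 3), 0, A 0 3, -(A 0 2);
     A 1 3, -(A 0 3), 0, A 0 1;
     -(A 1 2), A 0 2, -(A 0 1), 0]

/-- The Hodge star on 2-forms of the metric with Gram matrix G,
characterized by α ∧ (hodge2 G β) = ⟨α,β⟩_G dvol_G. -/
def hodge2 (G : Mat4) (A : Mat4) : Mat4 := volScalar G • dual2 (G⁻¹ * A * G⁻¹)

/-- The Hodge star Λ¹ → Λ³ of G, characterized by λ ∧ (hodge1 G μ) = ⟨λ,μ⟩_G dvol_G. -/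
def hodge1 (G : Mat4) (m : V4) : V4 := volScalar G • G⁻¹.mulVec m

/-- The Hodge star Λ³ → Λ¹ of G, characterized by hodge1 G (hodge3 G b) = -b. -/
def hodge3 (G : Mat4) (b : V4) : V4 := -((volScalar G)⁻¹ • G.mulVec b)

/-- A complex structure J (J² = -1) is compatible with the standard orientation. -/
def posOrient (J : Mat4) : Prop :=
  ∃ v w : V4, 0 < (Matrix.of fun i k => ![v, J.mulVec v, w, J.mulVec w] k i).det

/-- The inner product on 2-forms induced by the standard metric. -/
def ip2std (A B : Mat4) : ℝ := (1 / 2) * (Aᵀ * B).trace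

/-- The involution R^ρ of the space of 2-forms determined by a
nondegenerate 2-form ρ (with matrix P). -/
def Rmap (P A : Mat4) : Mat4 := A - (w22 A P / (w22 P P / 2)) • P

/-- The standard hyperKähler triple ω₁ = dx0∧dx1 + dx2∧dx3, etc. -/
def sW1 : Mat4 := !![0,1,0,0; -1,0,0,0; 0,0,0,1; 0,0,-1,0]
def sW2 : Mat4 := !![0,0,1,0; 0,0,0,-1; -1,0,0,0; 0,1,0,0]
def sW3 : Mat4 := !![0,0,0,1; 0,0,1,0; 0,-1,0,0; -1,0,0,0]

-- auxiliary
def skew (a b c d e f : ℝ) : Mat4 := !![0,a,b,c; -a,0,d,e; -b,-d,0,f; -c,-e,-f,0]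

lemma skew_exists (A : Mat4) (hA : Aᵀ = -A) :
    ∃ a b c d e f : ℝ, A = skew a b c d e f := by
  have h : ∀ i j, A j i = -(A i j) := fun i j => by
    simpa using congrFun (congrFun hA i) j
  refine ⟨A 0 1, A 0 2, A 0 3, A 1 2, A 1 3, A 2 3, ?_⟩
  ext i j
  fin_cases i <;> fin_cases j <;>
    simp [skew] <;>
    first
      | (linarith [h 0 0]) | (linarith [h 1 1]) | (linarith [h 2 2]) | (linarith [h 3 3])
      | (linarith [h 0 1]) | (linarith [h 0 2]) | (linarith [h 0 3])
      | (linarith [h 1 2]) | (linarith [h 1 3]) | (linarith [h 2 3])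

lemma skew_w22 (a b c d e f : ℝ) :
    w22 (skew a b c d e f) (skew a b c d e f) = 2 * (a*f - b*e + c*d) := by
  simp [w22, skew]; ring

lemma skew_det (a b c d e f : ℝ) :
    (skew a b c d e f).det = (a*f - b*e + c*d)^2 := by
  simp only [skew, Matrix.det_succ_row_zero, ← Nat.not_even_iff_odd,
    Matrix.submatrix_apply, Fin.succ_zero_eq_one, Matrix.submatrix_submatrix,
    Matrix.det_unique, Fin.default_eq_zero, Function.comp_apply, Fin.succ_one_eq_two,
    Fin.sum_univ_succ, Fin.val_zero, Fin.zero_succAbove, Finset.univ_unique, Fin.val_succ,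
    Fin.val_eq_zero, Fin.succ_succAbove_zero, Finset.sum_singleton, Fin.succ_succAbove_one,
    Even.add_self, Matrix.cons_val', Matrix.cons_val_zero, Matrix.cons_val_one,
    Matrix.head_cons, Matrix.head_fin_const, Matrix.cons_val_fin_one, Matrix.empty_val']
  norm_num [Fin.succAbove, Fin.ext_iff, Fin.lt_def, Matrix.cons_val_two, Matrix.tail_cons,
    Matrix.head_cons, Matrix.cons_val_one, Matrix.cons_val_zero,
    show Fin.castSucc (2:Fin 3) = (2:Fin 4) from rfl]
  ring

lemma skew_mul_dual2 (a b c d e f : ℝ) :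
    skew a b c d e f * dual2 (skew a b c d e f) = (-(a*f - b*e + c*d)) • 1 := by
  ext i j
  fin_cases i <;> fin_cases j <;>
    simp [skew, dual2, Matrix.mul_apply, Fin.sum_univ_four, Matrix.one_apply] <;> ring

lemma dual2_mul_skew (a b c d e f : ℝ) :
    dual2 (skew a b c d e f) * skew a b c d e f = (-(a*f - b*e + c*d)) • 1 := by
  ext i j
  fin_cases i <;> fin_cases j <;>
    simp [skew, dual2, Matrix.mul_apply, Fin.sum_univ_four, Matrix.one_apply] <;> ring

lemma w21_eq (A : Mat4) (l : V4) : w21 A l = (dual2 A).mulVec l := by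
  ext i
  fin_cases i <;>
    simp [w21, dual2, Matrix.mulVec, dotProduct, Fin.sum_univ_four] <;> ring

lemma mulVec_ext {M N : Mat4} (h : ∀ x, M.mulVec x = N.mulVec x) : M = N := by
  ext i j
  simpa using congrFun (h (Pi.single j 1)) i


/-- g(v,w) = ω(v,Jw) iff dvol_ω = dvol_g and *_g(ω∧λ) = -λ∘J
for all covectors λ. -/
theorem compatible_metric_iff (G : Mat4) (hG : G.PosDef)
    (A : Mat4) (hA : Aᵀ = -A) (hApos : 0 < w22 A A)
    (J : Mat4) (hJ : J * J = -1) (hJor : posOrient J)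
    (star1 star3 : V4 → V4)
    (hstar1 : ∀ l m : V4, w13 l (star1 m) = ip1 G l m * volScalar G)
    (hstar3 : ∀ b : V4, star1 (star3 b) = -b) :
    (∀ v w : V4, bilin G v w = v ⬝ᵥ A.mulVec (J.mulVec w)) ↔
      (w22 A A / 2 = volScalar G ∧
        ∀ l : V4, star3 (w21 A l) = -(Jᵀ.mulVec l)) := by
  obtain ⟨a, b, c, d, e, f, rfl⟩ := skew_exists A hA
  set S := volScalar G with hS
  set p : ℝ := a*f - b*e + c*d with hp
  set W : Mat4 := skew a b c d e f with hW
  have hppos : 0 < p := by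
    have := hApos; rw [skew_w22] at this; linarith
  have hdetG : 0 < G.det := hG.det_pos
  have hSpos : 0 < S := Real.sqrt_pos.mpr hdetG
  have hGsymm : Gᵀ = G := by simpa using hG.isHermitian.eq
  have hGunit : IsUnit G.det := isUnit_iff_ne_zero.mpr (ne_of_gt hdetG)
  -- star1 is determined
  have hstar1' : ∀ m : V4, star1 m = S • G⁻¹.mulVec m := by
    intro m; funext i
    have := hstar1 (Pi.single i 1) m
    simp [w13, ip1] at this
    simp [this, mul_comm]
  -- star3 is determined
  have hstar3' : ∀ b : V4, star3 b = -(S⁻¹ • G.mulVec b) := by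
    intro x
    have h1 : S • G⁻¹.mulVec (star3 x) = -x := by rw [← hstar1']; exact hstar3 x
    have h2 : G.mulVec (G⁻¹.mulVec (star3 x)) = star3 x := by
      rw [Matrix.mulVec_mulVec, Matrix.mul_nonsing_inv G hGunit, Matrix.one_mulVec]
    calc star3 x = G.mulVec (G⁻¹.mulVec (star3 x)) := h2.symm
      _ = G.mulVec (S⁻¹ • (S • G⁻¹.mulVec (star3 x))) := by
          rw [smul_smul, inv_mul_cancel₀ (ne_of_gt hSpos), one_smul]
      _ = -(S⁻¹ • G.mulVec x) := by
          rw [h1, Matrix.mulVec_smul, Matrix.mulVec_neg, smul_neg]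
  -- condition 2 in matrix form
  have hcond2 : (∀ l : V4, star3 (w21 W l) = -(Jᵀ.mulVec l)) ↔
      G * dual2 W = S • Jᵀ := by
    constructor
    · intro h
      apply mulVec_ext
      intro x
      have := h x
      rw [hstar3', w21_eq, neg_inj] at this
      have := congrArg (fun v => S • v) this
      simp only [smul_smul, mul_inv_cancel₀ (ne_of_gt hSpos), one_smul] at this
      rw [← Matrix.mulVec_mulVec, Matrix.smul_mulVec]
      exact this
    · intro h l
      rw [hstar3', w21_eq, neg_inj, Matrix.mulVec_mulVec, h,
        Matrix.smul_mulVec, smul_smul, inv_mul_cancel₀ (ne_of_gt hSpos), one_smul]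
  -- condition 1 (bilin) in matrix form
  have hcond1 : (∀ v w : V4, bilin G v w = v ⬝ᵥ W.mulVec (J.mulVec w)) ↔
      G = W * J := by
    constructor
    · intro h
      apply mulVec_ext
      intro x
      funext i
      have := h (Pi.single i 1) x
      simp only [bilin, Matrix.mulVec_mulVec] at this
      simpa using this
    · intro h v w
      rw [bilin, h, ← Matrix.mulVec_mulVec]
  rw [hcond1, skew_w22, ← hp]
  have hWt : Wᵀ = -W := hA
  constructor
  · intro h
    have hJtW : Jᵀ * W = -G := by
      calc Jᵀ * W = -(Jᵀ * Wᵀ) := by rw [hWt]; noncomm_ring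
        _ = -(W * J)ᵀ := by rw [Matrix.transpose_mul]
        _ = -Gᵀ := by rw [h]
        _ = -G := by rw [hGsymm]
    have hdetJ2 : J.det * J.det = 1 := by
      have := congrArg Matrix.det hJ
      rw [Matrix.det_mul] at this
      rw [this, Matrix.det_neg]
      norm_num
    have hdetGW : G.det = p^2 * J.det := by
      rw [h, Matrix.det_mul, hW, skew_det, ← hp]
    have hdetJpos : 0 < J.det := by nlinarith
    have hdetJ : J.det = 1 := by nlinarith
    have hSp : S = p := by
      rw [hS, volScalar, hdetGW, hdetJ, mul_one, Real.sqrt_sq (le_of_lt hppos)]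
    constructor
    · rw [hSp]; ring
    · rw [hcond2]
      calc G * dual2 W = -(Jᵀ * W) * dual2 W := by rw [hJtW]; simp
        _ = -(Jᵀ * (W * dual2 W)) := by noncomm_ring
        _ = -(Jᵀ * ((-p) • 1)) := by rw [hW, skew_mul_dual2]
        _ = p • Jᵀ := by simp
        _ = S • Jᵀ := by rw [hSp]
  · rintro ⟨h1, h2⟩
    rw [hcond2] at h2
    have hSp : S = p := by linarith
    have hkey : (-p) • G = p • (Jᵀ * W) := by
      calc (-p) • G = G * ((-p) • 1) := by simp
        _ = G * (dual2 W * W) := by rw [hW, dual2_mul_skew]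
        _ = (G * dual2 W) * W := by rw [Matrix.mul_assoc]
        _ = S • (Jᵀ * W) := by rw [h2, Matrix.smul_mul]
        _ = p • (Jᵀ * W) := by rw [hSp]
    have hJtW : Jᵀ * W = -G := by
      have h3 : p • (Jᵀ * W) = p • (-G) := by
        rw [← hkey, neg_smul, smul_neg]
      exact smul_right_injective Mat4 (ne_of_gt hppos) h3
    calc G = Gᵀ := hGsymm.symm
      _ = (-(Jᵀ * W))ᵀ := by rw [hJtW, neg_neg]
      _ = -(Wᵀ * J) := by simp [Matrix.transpose_mul]
      _ = W * J := by rw [hWt]; simp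


end
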